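/- Under the homology ladder setup, fix an integer k and let λ_k : BX_k → CX_k be the unique Λ-linear map satisfying j_k ∘ λ_k + θ_k ∘ f_k = id_{BX_k} and g_k ∘ λ_k = 0. Then η_k is injective, and the Λ-linear map BX_k → BY_k ⊕ (CX_k / η_k(CY_k)) sending x to (f_k x, class of λ_k x) is an isomorphism, whose inverse sends (y, class of w̃) to θ_k y + j_k λ_k j_k w̃ (a well-defined assignment, using j_k ∘ η_k = θ_k ∘ i_k and λ_k ∘ θ_k = 0). (Proposition 4.4 of the paper, abstracting H_k(X) ≅ H_k(Y) ⊕ H_k(W̃)/H_k(W).) -/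

import Mathlib

open Function

/-- Proposition 4.4: under the homology ladder setup, `η` is injective and the map
`x ↦ (f x, class of λ x)` is an isomorphism `BX_k ≅ BY_k ⊕ CX_k/η(CY_k)`, with inverse
`(y, class of w̃) ↦ θ y + j (λ (j w̃))`. -/
theorem homology_decomposition
    (Λ : Type*) [CommRing Λ]
    (U BX BY CX CY : ℤ → Type*)
    [∀ k, AddCommGroup (U k)] [∀ k, Module Λ (U k)]
    [∀ k, AddCommGroup (BX k)] [∀ k, Module Λ (BX k)]
    [∀ k, AddCommGroup (BY k)] [∀ k, Module Λ (BY k)]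
    [∀ k, AddCommGroup (CX k)] [∀ k, Module Λ (CX k)]
    [∀ k, AddCommGroup (CY k)] [∀ k, Module Λ (CY k)]
    (dX : ∀ k, U (k+1) →ₗ[Λ] CX k) (j : ∀ k, CX k →ₗ[Λ] BX k) (sX : ∀ k, BX k →ₗ[Λ] U k)
    (dY : ∀ k, U (k+1) →ₗ[Λ] CY k) (i : ∀ k, CY k →ₗ[Λ] BY k) (sY : ∀ k, BY k →ₗ[Λ] U k)
    (hXex₁ : ∀ k, Function.Exact (dX k) (j k))
    (hXex₂ : ∀ k, Function.Exact (j k) (sX k))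
    (hXex₃ : ∀ k, Function.Exact (sX (k+1)) (dX k))
    (hYex₁ : ∀ k, Function.Exact (dY k) (i k))
    (hYex₂ : ∀ k, Function.Exact (i k) (sY k))
    (hYex₃ : ∀ k, Function.Exact (sY (k+1)) (dY k))
    (g : ∀ k, CX k →ₗ[Λ] CY k) (f : ∀ k, BX k →ₗ[Λ] BY k)
    (hgd : ∀ k, (g k).comp (dX k) = dY k)
    (hig : ∀ k, (i k).comp (g k) = (f k).comp (j k))
    (hsf : ∀ k, (sY k).comp (f k) = sX k)
    (η : ∀ k, CY k →ₗ[Λ] CX k) (θ : ∀ k, BY k →ₗ[Λ] BX k)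
    (hηd : ∀ k, (η k).comp (dY k) = dX k)
    (hjη : ∀ k, (j k).comp (η k) = (θ k).comp (i k))
    (hsθ : ∀ k, (sX k).comp (θ k) = sY k)
    (hfθ : ∀ k, (f k).comp (θ k) = LinearMap.id)
    (hgη : ∀ k, (g k).comp (η k) = LinearMap.id)
    (k : ℤ)
    (lam : BX k →ₗ[Λ] CX k)
    (hlam₁ : (j k).comp lam + (θ k).comp (f k) = LinearMap.id)
    (hlam₂ : (g k).comp lam = 0) :
    Function.Injective ⇑(η k) ∧
    ∃ Ψ : (BY k × (CX k ⧸ LinearMap.range (η k))) →ₗ[Λ] BX k,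
      (∀ (y : BY k) (w : CX k),
        Ψ (y, Submodule.Quotient.mk w) = θ k y + j k (lam (j k w))) ∧
      Ψ.comp (LinearMap.prod (f k) ((LinearMap.range (η k)).mkQ.comp lam))
        = LinearMap.id ∧
      (LinearMap.prod (f k) ((LinearMap.range (η k)).mkQ.comp lam)).comp Ψ
        = LinearMap.id := by

  have hηd' : ∀ u, η k (dY k u) = dX k u := fun u => LinearMap.congr_fun (hηd k) u
  have hgη' : ∀ c, g k (η k c) = c := fun c => LinearMap.congr_fun (hgη k) c
  have hfθ' : ∀ y, f k (θ k y) = y := fun y => LinearMap.congr_fun (hfθ k) y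
  have hig' : ∀ w, i k (g k w) = f k (j k w) := fun w => LinearMap.congr_fun (hig k) w
  have hjη' : ∀ c, j k (η k c) = θ k (i k c) := fun c => LinearMap.congr_fun (hjη k) c
  have hlam1' : ∀ x, j k (lam x) + θ k (f k x) = x := fun x => LinearMap.congr_fun hlam₁ x
  have hgl : ∀ x, g k (lam x) = 0 := fun x => LinearMap.congr_fun hlam₂ x
  have hzero : ∀ x : CX k, j k x = 0 → g k x = 0 → x = 0 := by
    intro x hj hg
    obtain ⟨u, rfl⟩ := (hXex₁ k x).mp hj
    rw [← hηd' u] at hg ⊢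
    rw [hgη'] at hg
    rw [hg, map_zero]
  have hηinj : Function.Injective ⇑(η k) := Function.LeftInverse.injective hgη'
  have hlamθ : ∀ y, lam (θ k y) = 0 := by
    intro y
    apply hzero
    · have h := hlam1' (θ k y)
      rw [hfθ'] at h
      exact add_eq_right.mp h
    · exact hgl _
  have key : ∀ w, g k w = 0 → lam (j k w) = w := by
    intro w hw
    have h := hlam1' (j k w)
    rw [← hig' w, hw, map_zero, map_zero, add_zero] at h
    have h1 : j k (lam (j k w) - w) = 0 := by rw [map_sub, h, sub_self]
    have h2 : g k (lam (j k w) - w) = 0 := by rw [map_sub, hgl, hw, sub_self]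
    exact sub_eq_zero.mp (hzero _ h1 h2)
  refine ⟨hηinj, ?_⟩
  have hΦη : LinearMap.range (η k) ≤ LinearMap.ker ((j k) ∘ₗ (lam ∘ₗ (j k))) := by
    rintro _ ⟨c, rfl⟩
    simp [LinearMap.mem_ker, hjη', hlamθ]
  refine ⟨(θ k) ∘ₗ (LinearMap.fst Λ _ _) +
      ((LinearMap.range (η k)).liftQ ((j k) ∘ₗ (lam ∘ₗ (j k))) hΦη) ∘ₗ (LinearMap.snd Λ _ _),
    ?_, ?_, ?_⟩
  · intro y w
    simp [Submodule.liftQ_apply]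
  · ext x
    simp only [LinearMap.comp_apply, LinearMap.add_apply, LinearMap.prod_apply,
      LinearMap.fst_apply, LinearMap.snd_apply, Pi.prod, Function.prod, Submodule.mkQ_apply,
      Submodule.liftQ_apply, LinearMap.id_apply]
    rw [key (lam x) (hgl x), add_comm]
    exact hlam1' x
  · apply LinearMap.ext
    rintro ⟨y, wq⟩
    obtain ⟨w, rfl⟩ := Submodule.Quotient.mk_surjective _ wq
    simp only [LinearMap.comp_apply, LinearMap.add_apply, LinearMap.prod_apply,
      LinearMap.fst_apply, LinearMap.snd_apply, Pi.prod, Function.prod, Submodule.mkQ_apply,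
      Submodule.liftQ_apply, LinearMap.id_apply]
    have hjw : j k (lam (j k w)) = j k (w - η k (g k w)) := by
      have h := hlam1' (j k w)
      rw [← hig' w, ← hjη'] at h
      rw [map_sub]
      exact eq_sub_of_add_eq h
    have hgw : g k (w - η k (g k w)) = 0 := by rw [map_sub, hgη', sub_self]
    refine Prod.ext ?_ ?_
    · simp only [map_add, hfθ', ← hig', hgl, map_zero, add_zero]
    · show Submodule.Quotient.mk (lam (θ k y + j k (lam (j k w)))) = Submodule.Quotient.mk w
      rw [map_add, hlamθ, zero_add, hjw, key _ hgw]
      rw [Submodule.Quotient.eq]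
      exact ⟨-(g k w), by simp⟩
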